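/- There exist regular languages L₁ and L₂ (over the alphabet Σ = {a, b, $, %}) such that L₁ ←max-sdi L₂ is not regular. -/

import Mathlib

/-- Site-directed insertion (SDI) of string `y` into string `x`. -/
def sdiStr {α : Type} (x y : List α) : Set (List α) :=
  { w | ∃ x₁ u z v x₂ : List α,
      x = x₁ ++ u ++ v ++ x₂ ∧ y = u ++ z ++ v ∧ u ≠ [] ∧ v ≠ [] ∧
      w = x₁ ++ u ++ z ++ v ++ x₂ }

/-- Site-directed insertion extended to languages. -/
def sdiLang {α : Type} (L₁ L₂ : Set (List α)) : Set (List α) :=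
  { w | ∃ x ∈ L₁, ∃ y ∈ L₂, w ∈ sdiStr x y }

/-- Alphabetic site-directed insertion of string `y` into string `x`. -/
def asdiStr {α : Type} (x y : List α) : Set (List α) :=
  { w | ∃ (x₁ x₂ z : List α) (a b : α),
      x = x₁ ++ [a] ++ [b] ++ x₂ ∧ y = [a] ++ z ++ [b] ∧
      w = x₁ ++ [a] ++ z ++ [b] ++ x₂ }

/-- Alphabetic site-directed insertion extended to languages. -/
def asdiLang {α : Type} (L₁ L₂ : Set (List α)) : Set (List α) :=
  { w | ∃ x ∈ L₁, ∃ y ∈ L₂, w ∈ asdiStr x y }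

/-- Maximal site-directed insertion of string `y` into string `x`. -/
def maxSdiStr {α : Type} (x y : List α) : Set (List α) :=
  { w | ∃ x₁ u z v x₂ : List α,
      x = x₁ ++ u ++ v ++ x₂ ∧ y = u ++ z ++ v ∧ u ≠ [] ∧ v ≠ [] ∧
      w = x₁ ++ u ++ z ++ v ++ x₂ ∧
      ¬ ∃ x₁' x₂' z' : List α, x₁' <:+ x₁ ∧ x₂' <+: x₂ ∧
          x₁' ++ x₂' ≠ [] ∧ y = x₁' ++ u ++ z' ++ v ++ x₂' }

/-- Maximal site-directed insertion extended to languages. -/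
def maxSdiLang {α : Type} (L₁ L₂ : Set (List α)) : Set (List α) :=
  { w | ∃ x ∈ L₁, ∃ y ∈ L₂, w ∈ maxSdiStr x y }

/-- Minimal site-directed insertion of string `y` into string `x`:
the words `u` and `v` of the matched outfix must be unbordered. -/
def minSdiStr {α : Type} (x y : List α) : Set (List α) :=
  { w | ∃ x₁ u z v x₂ : List α,
      x = x₁ ++ u ++ v ++ x₂ ∧ y = u ++ z ++ v ∧ u ≠ [] ∧ v ≠ [] ∧
      w = x₁ ++ u ++ z ++ v ++ x₂ ∧
      (∀ s : List α, s <:+ u → s ≠ [] → s ≠ u → ¬ s <+: u) ∧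
      (∀ p : List α, p <+: v → p ≠ [] → p ≠ v → ¬ p <:+ v) }

/-- Minimal site-directed insertion extended to languages. -/
def minSdiLang {α : Type} (L₁ L₂ : Set (List α)) : Set (List α) :=
  { w | ∃ x ∈ L₁, ∃ y ∈ L₂, w ∈ minSdiStr x y }

/-- The four-letter alphabet Σ = {a, b, $, %}. -/
inductive Sym4 : Type
  | a : Sym4
  | b : Sym4
  | dollar : Sym4
  | percent : Sym4
  deriving DecidableEq

instance instFintypeSym4 : Fintype Sym4 :=
  ⟨{Sym4.a, Sym4.b, Sym4.dollar, Sym4.percent}, fun x => by cases x <;> simp⟩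

namespace MaxSdiProof

abbrev sa : Sym4 := Sym4.a
abbrev sp : Sym4 := Sym4.percent

/-- `rep n` = aⁿ. -/
def rep (n : ℕ) : List Sym4 := List.replicate n sa

@[simp] lemma rep_zero : rep 0 = [] := rfl
@[simp] lemma rep_succ (n : ℕ) : rep (n + 1) = sa :: rep n := rfl
lemma rep_add (m n : ℕ) : rep (m + n) = rep m ++ rep n := List.replicate_add m n sa
@[simp] lemma rep_length (n : ℕ) : (rep n).length = n := List.length_replicate
@[simp] lemma rep_app_rep_app (m n : ℕ) (l : List Sym4) :
    rep m ++ (rep n ++ l) = rep (m + n) ++ l := by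
  rw [rep_add, List.append_assoc]
@[simp] lemma rep_app_rep (m n : ℕ) : rep m ++ rep n = rep (m + n) := (rep_add m n).symm

lemma eq_sa_of_mem_rep {c : Sym4} {n : ℕ} (h : c ∈ rep n) : c = sa :=
  List.eq_of_mem_replicate h

/-- number of leading `a`s -/
def lead : List Sym4 → ℕ
  | Sym4.a :: l => lead l + 1
  | _ => 0

/-- what comes after the first `%` (assuming the word starts with a block of `a`s). -/
def tl1 : List Sym4 → List Sym4
  | Sym4.a :: l => tl1 l
  | Sym4.percent :: l => l
  | _ => []

@[simp] lemma lead_sa (l : List Sym4) : lead (sa :: l) = lead l + 1 := rfl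
@[simp] lemma lead_sp (l : List Sym4) : lead (sp :: l) = 0 := rfl
@[simp] lemma tl1_sa (l : List Sym4) : tl1 (sa :: l) = tl1 l := rfl
@[simp] lemma tl1_sp (l : List Sym4) : tl1 (sp :: l) = l := rfl

@[simp] lemma lead_rep_app (m : ℕ) (l : List Sym4) : lead (rep m ++ l) = m + lead l := by
  induction m with
  | zero => simp
  | succ m ih => simpa [Nat.succ_add, Nat.add_comm] using ih

@[simp] lemma tl1_rep_app (m : ℕ) (l : List Sym4) : tl1 (rep m ++ l) = tl1 l := by
  induction m with
  | zero => simp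
  | succ m ih => simpa using ih

/-- counts `%`s. -/
def nsp : List Sym4 → ℕ
  | [] => 0
  | Sym4.percent :: l => nsp l + 1
  | _ :: l => nsp l

@[simp] lemma nsp_nil : nsp [] = 0 := rfl
@[simp] lemma nsp_sp (l : List Sym4) : nsp (sp :: l) = nsp l + 1 := rfl
@[simp] lemma nsp_sa (l : List Sym4) : nsp (sa :: l) = nsp l := rfl

@[simp] lemma nsp_append (l₁ l₂ : List Sym4) : nsp (l₁ ++ l₂) = nsp l₁ + nsp l₂ := by
  induction l₁ with
  | nil => simp
  | cons c l ih =>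
    cases c <;> simp [nsp, ih] <;> omega

@[simp] lemma nsp_rep (n : ℕ) : nsp (rep n) = 0 := by
  induction n with
  | zero => rfl
  | succ n ih => simpa using ih

lemma nsp_pos_of_mem {l : List Sym4} (h : sp ∈ l) : 0 < nsp l := by
  induction l with
  | nil => simp at h
  | cons c l ih =>
    rcases List.mem_cons.mp h with h | h
    · cases c <;> simp_all [nsp]
    · have := ih h
      cases c <;> simp [nsp] <;> omega

lemma not_mem_of_nsp_zero {l : List Sym4} (h : nsp l = 0) : sp ∉ l := by
  intro hm
  have := nsp_pos_of_mem hm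
  omega

/-- splitting a prefix off `aᴺ % R`. -/
lemma prefix_split : ∀ {N : ℕ} {x L R : List Sym4}, x ++ L = rep N ++ sp :: R →
    (∃ j, j ≤ N ∧ x = rep j ∧ L = rep (N - j) ++ sp :: R) ∨
    (∃ t, x = rep N ++ sp :: t ∧ t ++ L = R) := by
  intro N
  induction N with
  | zero =>
    intro x L R h
    cases x with
    | nil => exact Or.inl ⟨0, le_refl _, rfl, by simpa using h⟩
    | cons c x' =>
      simp only [rep_zero, List.nil_append, List.cons_append, List.cons.injEq] at h
      exact Or.inr ⟨x', by simp [h.1], h.2⟩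
  | succ N ih =>
    intro x L R h
    cases x with
    | nil => exact Or.inl ⟨0, by omega, rfl, by simpa using h⟩
    | cons c x' =>
      rw [rep_succ] at h
      simp only [List.cons_append, List.cons.injEq] at h
      obtain ⟨rfl, h2⟩ := h
      rcases ih h2 with ⟨j, hj, rfl, hL⟩ | ⟨t, rfl, ht⟩
      · exact Or.inl ⟨j + 1, by omega, by simp, by
          have : N + 1 - (j + 1) = N - j := by omega
          rw [this]; exact hL⟩
      · exact Or.inr ⟨t, by simp, ht⟩

/-- The two regular languages. L1 = a* % a a % a -/
def L1 : Language Sym4 := { w | ∃ n, w = rep n ++ sp :: [sa, sa, sp, sa] }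

/-- L2 = a⁺ % a a a -/
def L2 : Language Sym4 := { w | ∃ i, w = rep (i + 1) ++ sp :: [sa, sa, sa] }

/-- The interesting word family. -/
def wrd (n i : ℕ) : List Sym4 := rep n ++ sp :: (rep i ++ sp :: [sa, sa, sa, sp, sa])

/-- Membership: i > n gives a maximal site-directed insertion. -/
lemma mem_w (N : ℕ) : wrd N (N + 1) ∈ maxSdiLang L1 L2 := by
  refine ⟨rep N ++ sp :: [sa, sa, sp, sa], ⟨N, rfl⟩,
          rep (N + 1) ++ sp :: [sa, sa, sa], ⟨N, rfl⟩,
          rep N ++ [sp], [sa], rep N ++ sp :: [sa, sa], [sa], [sp, sa], ?_, ?_, ?_, ?_, ?_, ?_⟩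
  · simp
  · simp
  · simp
  · simp
  · simp [wrd]
  · rintro ⟨x₁', x₂', z', hsuf, hpre, hne, heq⟩
    obtain ⟨s, hs⟩ := hsuf
    -- characterize x₁'
    have hs' : s ++ x₁' = rep N ++ sp :: [] := by simpa using hs
    rcases prefix_split hs' with ⟨j, hj, rfl, hL⟩ | ⟨t, rfl, ht⟩
    · -- x₁' = rep (N-j) ++ [sp]
      have hlead := congrArg lead heq
      rw [hL] at hlead
      simp at hlead
      omega
    · -- x₁' = [] (t ++ x₁' = [])
      have hx₁' : x₁' = [] := by
        cases (List.append_eq_nil_iff.mp ht) with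
        | intro h1 h2 => exact h2
      subst hx₁'
      obtain ⟨r, hr⟩ := hpre
      -- x₂' is a prefix of [sp, sa]
      match x₂', hr with
      | [], _ => simp at hne
      | [c], hr =>
        simp only [List.cons_append, List.cons.injEq] at hr
        obtain ⟨rfl, -⟩ := hr
        have := congrArg List.reverse heq
        simp [List.reverse_append] at this
      | [c1, c2], hr =>
        simp only [List.cons_append, List.cons.injEq] at hr
        obtain ⟨rfl, rfl, -⟩ := hr
        have := congrArg List.reverse heq
        simp [List.reverse_append] at this
      | c1 :: c2 :: c3 :: l, hr =>
        have hlen := congrArg List.length hr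
        simp at hlen

/-- Non-membership: if i ≤ n the word is not obtainable. -/
lemma not_mem_w {n i : ℕ} (h2 : i ≤ n) : wrd n i ∉ maxSdiLang L1 L2 := by
  rintro ⟨x, ⟨N, rfl⟩, y, ⟨I, rfl⟩, x₁, u, z, v, x₂, hx, hy, hu, hv, hw, hmax⟩
  -- counting percents
  have hcx := congrArg nsp hx
  have hcy := congrArg nsp hy
  have hcw := congrArg nsp hw
  simp [wrd] at hcx hcy hcw
  have hcu : nsp u = 0 := by omega
  have hcv : nsp v = 0 := by omega
  have hcz : nsp z = 1 := by omega
  -- u and v consist of 'a's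
  have hmemx : ∀ c ∈ u ++ v, c = sa := by
    intro c hc
    have hcx2 : c ∈ rep N ++ sp :: [sa, sa, sp, sa] := by
      rw [hx]
      rcases List.mem_append.mp hc with h | h
      · simp [h]
      · simp [h]
    have hsp : c ≠ sp := by
      rintro rfl
      rcases List.mem_append.mp hc with h | h
      · exact absurd h (not_mem_of_nsp_zero hcu)
      · exact absurd h (not_mem_of_nsp_zero hcv)
    rcases List.mem_append.mp hcx2 with h | h
    · exact eq_sa_of_mem_rep h
    · simp at h
      tauto
  obtain ⟨p, hue⟩ : ∃ p, u = rep p :=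
    ⟨u.length, List.eq_replicate_length.mpr fun c hc => hmemx c (by simp [hc])⟩
  obtain ⟨q, hve⟩ : ∃ q, v = rep q :=
    ⟨v.length, List.eq_replicate_length.mpr fun c hc => hmemx c (by simp [hc])⟩
  have hp : 1 ≤ p := by
    rcases Nat.eq_zero_or_pos p with rfl | h
    · exact absurd (by simpa using hue) hu
    · exact h
  have hq : 1 ≤ q := by
    rcases Nat.eq_zero_or_pos q with rfl | h
    · exact absurd (by simpa using hve) hv
    · exact h
  -- extract z from y
  have hy' : rep p ++ (z ++ rep q) = rep (I + 1) ++ sp :: [sa, sa, sa] := by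
    rw [← hue, ← hve]
    simpa [List.append_assoc] using hy.symm
  rcases prefix_split hy' with ⟨j, hj, hpj, hz1⟩ | ⟨t, hpt, -⟩
  swap
  · have hmem : sp ∈ rep p := by rw [hpt]; simp
    exact absurd hmem (not_mem_of_nsp_zero (by simp))
  have hjp : p = j := by
    have := congrArg List.length hpj
    simpa using this
  subst hjp
  rcases prefix_split hz1 with ⟨j2, hj2, hzj, hrem⟩ | ⟨t, hzt, htq⟩
  · rw [hzj] at hcz; simp at hcz
  -- z = rep (I+1-p) ++ sp :: t,  t ++ rep q = [a,a,a]
  obtain ⟨τ, hteq, hτ3⟩ : ∃ τ, t = rep τ ∧ τ + q = 3 := by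
    refine ⟨t.length, ?_, ?_⟩
    · refine List.eq_replicate_length.mpr fun c hc => ?_
      have hm : c ∈ ([sa, sa, sa] : List Sym4) := by rw [← htq]; simp [hc]
      simp at hm
      exact hm
    · have := congrArg List.length htq
      simpa using this
  subst hteq
  -- now split x
  have hx' : x₁ ++ (rep p ++ (rep q ++ x₂)) = rep N ++ sp :: [sa, sa, sp, sa] := by
    rw [← hue, ← hve]
    simpa [List.append_assoc] using hx.symm
  rcases prefix_split hx' with ⟨j1, hj1, hx1, hrest⟩ | ⟨t₁, hx1, hrest⟩
  · -- insertion inside the first a-block: third block of w would be "aa", contradiction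
    have hrest' : rep (p + q) ++ x₂ = rep (N - j1) ++ sp :: [sa, sa, sp, sa] := by
      simpa [List.append_assoc] using hrest
    rcases prefix_split hrest' with ⟨j2, hj2, hj2e, hx2⟩ | ⟨t₂, hmm, -⟩
    swap
    · have hmem : sp ∈ rep (p + q) := by rw [hmm]; simp
      exact absurd hmem (not_mem_of_nsp_zero (by simp))
    have hj2pq : p + q = j2 := by
      have := congrArg List.length hj2e
      simpa using this
    subst hj2pq
    -- compute w and derive contradiction
    have hww : wrd n i = rep (j1 + p + (I + 1 - p)) ++ sp ::
        (rep (τ + q + (N - j1 - (p + q))) ++ sp :: [sa, sa, sp, sa]) := by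
      rw [hw, hx1, hue, hve, hzt, hx2]
      simp [List.append_assoc]
    have h1 := congrArg tl1 hww
    simp only [wrd, tl1_rep_app, tl1_sp] at h1
    have h2 := congrArg tl1 h1
    simp only [tl1_rep_app, tl1_sp] at h2
    exact absurd h2 (by simp)
  · -- x₁ = rep N ++ sp :: t₁ ; t₁ ++ (rep p ++ (rep q ++ x₂)) = [a,a,%,a]
    match t₁, hrest with
    | [], hrest =>
      simp only [List.nil_append] at hrest
      have hrest' : rep (p + q) ++ x₂ = rep 2 ++ sp :: [sa] := by
        simpa [List.append_assoc] using hrest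
      rcases prefix_split hrest' with ⟨j2, hj2, hj2e, hx2⟩ | ⟨t₂, hmm, -⟩
      swap
      · have hmem : sp ∈ rep (p + q) := by rw [hmm]; simp
        exact absurd hmem (not_mem_of_nsp_zero (by simp))
      have hj2pq : j2 = p + q := by
        have := congrArg List.length hj2e
        simpa using this.symm
      subst hj2pq
      obtain ⟨rfl, rfl⟩ : p = 1 ∧ q = 1 := by omega
      have hτ2 : τ = 2 := by omega
      subst hτ2
      have hx2' : x₂ = sp :: [sa] := by simpa using hx2
      -- compute w : n = N, i = I+1
      have hww : wrd n i = rep N ++ sp :: (rep (I + 1) ++ sp :: [sa, sa, sa, sp, sa]) := by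
        rw [hw, hx1, hue, hve, hzt, hx2']
        simp [List.append_assoc]
      have hn : n = N := by
        have := congrArg lead hww
        simpa [wrd] using this
      have hi : i = I + 1 := by
        have h1 := congrArg tl1 hww
        simp only [wrd, tl1_rep_app, tl1_sp] at h1
        have := congrArg lead h1
        simpa using this
      -- build the forbidden extension
      apply hmax
      refine ⟨rep i ++ [sp], [], [sa], ⟨rep (N - i), ?_⟩, ⟨x₂, by simp⟩, by simp, ?_⟩
      · rw [hx1]
        rw [← List.append_assoc, rep_app_rep]
        have : N - i + i = N := by omega
        rw [this]
      · rw [hue, hve, hi]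
        simp
    | [c0], hrest =>
      simp only [List.cons_append, List.cons.injEq] at hrest
      obtain ⟨rfl, hrest⟩ := hrest
      have hrest' : rep (p + q) ++ x₂ = rep 1 ++ sp :: [sa] := by
        simpa [List.append_assoc] using hrest
      rcases prefix_split hrest' with ⟨j2, hj2, hj2e, -⟩ | ⟨t₂, hmm, -⟩
      · have := congrArg List.length hj2e
        simp at this
        omega
      · have hmem : sp ∈ rep (p + q) := by rw [hmm]; simp
        exact absurd hmem (not_mem_of_nsp_zero (by simp))
    | [c0, c1], hrest =>
      simp only [List.cons_append, List.cons.injEq] at hrest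
      obtain ⟨rfl, rfl, hrest⟩ := hrest
      obtain ⟨p', rfl⟩ : ∃ p', p = p' + 1 := ⟨p - 1, by omega⟩
      rw [rep_succ] at hrest
      simp at hrest
    | [c0, c1, c2], hrest =>
      simp only [List.cons_append, List.cons.injEq] at hrest
      obtain ⟨rfl, rfl, rfl, hrest⟩ := hrest
      have hlen := congrArg List.length hrest
      simp at hlen
      omega
    | c0 :: c1 :: c2 :: c3 :: t', hrest =>
      have hlen := congrArg List.length hrest
      simp at hlen
      omega

/-! ### DFA for L1 -/

inductive St1 : Type
  | s0 | s1 | s2 | s3 | s4 | s5 | dead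
  deriving DecidableEq

instance : Fintype St1 :=
  ⟨{.s0, .s1, .s2, .s3, .s4, .s5, .dead}, fun x => by cases x <;> simp⟩

def step1 : St1 → Sym4 → St1
  | .s0, .a => .s0
  | .s0, .percent => .s1
  | .s1, .a => .s2
  | .s2, .a => .s3
  | .s3, .percent => .s4
  | .s4, .a => .s5
  | _, _ => .dead

def M1 : DFA Sym4 St1 := ⟨step1, .s0, {.s5}⟩

def D1 : St1 → List Sym4 → Prop
  | .s0, w => ∃ n, w = rep n ++ sp :: [sa, sa, sp, sa]
  | .s1, w => w = [sa, sa, sp, sa]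
  | .s2, w => w = [sa, sp, sa]
  | .s3, w => w = [sp, sa]
  | .s4, w => w = [sa]
  | .s5, w => w = []
  | .dead, _ => False

lemma ev1_char : ∀ (w : List Sym4) (s : St1), M1.evalFrom s w = St1.s5 → D1 s w := by
  intro w
  induction w with
  | nil =>
    intro s h
    have hs : s = St1.s5 := h
    subst hs
    exact rfl
  | cons c w ih =>
    intro s h
    have h' : M1.evalFrom (step1 s c) w = St1.s5 := h
    have hD := ih _ h'
    cases s <;> cases c <;> simp only [step1, D1] at hD ⊢ <;> try exact hD.elim
    · obtain ⟨n, rfl⟩ := hD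
      exact ⟨n + 1, by simp⟩
    · rw [hD]
      exact ⟨0, by simp⟩
    all_goals simp [hD]

lemma evrep1 : ∀ n, M1.evalFrom St1.s0 (rep n) = St1.s0 := by
  intro n
  induction n with
  | zero => rfl
  | succ n ih => simpa [rep, DFA.evalFrom, List.replicate_succ, M1, step1] using ih

lemma acc1 : M1.accepts = L1 := by
  ext w
  constructor
  · intro h
    have h5 : M1.evalFrom M1.start w = St1.s5 := by
      have := (DFA.mem_accepts (M := M1)).mp h
      simpa [M1, DFA.eval] using this
    exact ev1_char w _ h5
  · rintro ⟨n, rfl⟩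
    have : M1.eval (rep n ++ sp :: [sa, sa, sp, sa]) = St1.s5 := by
      rw [DFA.eval, DFA.evalFrom_of_append]
      have h0 : M1.evalFrom M1.start (rep n) = St1.s0 := evrep1 n
      rw [h0]
      rfl
    exact this

/-! ### DFA for L2 -/

inductive St2 : Type
  | p0 | p1 | p2 | p3 | p4 | p5 | dead
  deriving DecidableEq

instance : Fintype St2 :=
  ⟨{.p0, .p1, .p2, .p3, .p4, .p5, .dead}, fun x => by cases x <;> simp⟩

def step2 : St2 → Sym4 → St2
  | .p0, .a => .p1
  | .p1, .a => .p1
  | .p1, .percent => .p2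
  | .p2, .a => .p3
  | .p3, .a => .p4
  | .p4, .a => .p5
  | _, _ => .dead

def M2 : DFA Sym4 St2 := ⟨step2, .p0, {.p5}⟩

def D2 : St2 → List Sym4 → Prop
  | .p0, w => ∃ i, w = rep (i + 1) ++ sp :: [sa, sa, sa]
  | .p1, w => ∃ i, w = rep i ++ sp :: [sa, sa, sa]
  | .p2, w => w = [sa, sa, sa]
  | .p3, w => w = [sa, sa]
  | .p4, w => w = [sa]
  | .p5, w => w = []
  | .dead, _ => False

lemma ev2_char : ∀ (w : List Sym4) (s : St2), M2.evalFrom s w = St2.p5 → D2 s w := by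
  intro w
  induction w with
  | nil =>
    intro s h
    have hs : s = St2.p5 := h
    subst hs
    exact rfl
  | cons c w ih =>
    intro s h
    have h' : M2.evalFrom (step2 s c) w = St2.p5 := h
    have hD := ih _ h'
    cases s <;> cases c <;> simp only [step2, D2] at hD ⊢ <;> try exact hD.elim
    · obtain ⟨i, rfl⟩ := hD
      exact ⟨i, by simp⟩
    · obtain ⟨i, rfl⟩ := hD
      exact ⟨i + 1, by simp⟩
    · rw [hD]
      exact ⟨0, by simp⟩
    all_goals simp [hD]

lemma evrep2 : ∀ n, M2.evalFrom St2.p1 (rep n) = St2.p1 := by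
  intro n
  induction n with
  | zero => rfl
  | succ n ih => simpa [rep, DFA.evalFrom, List.replicate_succ, M2, step2] using ih

lemma acc2 : M2.accepts = L2 := by
  ext w
  constructor
  · intro h
    have h5 : M2.evalFrom M2.start w = St2.p5 := by
      have := (DFA.mem_accepts (M := M2)).mp h
      simpa [M2, DFA.eval] using this
    exact ev2_char w _ h5
  · rintro ⟨i, rfl⟩
    have : M2.eval (rep (i + 1) ++ sp :: [sa, sa, sa]) = St2.p5 := by
      rw [DFA.eval, DFA.evalFrom_of_append]
      have h0 : M2.evalFrom M2.start (rep (i + 1)) = St2.p1 := by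
        have : M2.evalFrom M2.start (rep (i + 1)) = M2.evalFrom St2.p1 (rep i) := by
          simp [rep, List.replicate_succ, DFA.evalFrom, M2, step2]
        rw [this, evrep2]
      rw [h0]
      rfl
    exact this

/-! ### Non-regularity -/

lemma not_reg : ¬ Language.IsRegular (maxSdiLang L1 L2) := by
  rintro ⟨σ, hfin, M, hM⟩
  set c := Fintype.card σ with hc
  have hw : wrd c (c + 1) ∈ M.accepts := by
    rw [hM]; exact mem_w c
  have hlen : c ≤ (wrd c (c + 1)).length := by
    simp [wrd]
  obtain ⟨α, β, γ, hsplit, hlenk, hβ, hsub⟩ := M.pumping_lemma hw hlen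
  set k := α.length + β.length with hk
  have hkc : k ≤ c := hlenk
  -- α ++ β = rep k
  have htake : α ++ β = rep k := by
    have h1 : ((α ++ β) ++ γ).take k = α ++ β := by
      have : k = (α ++ β).length := by simp [hk]
      rw [this, List.take_left]
    rw [← hsplit] at h1
    have h2 : (wrd c (c + 1)).take k = rep k := by
      rw [wrd, List.take_append]
      have hk0 : k - (rep c).length = 0 := by simp; omega
      rw [hk0]
      simp [rep, List.take_replicate]
      omega
    rw [h2] at h1
    exact h1.symm
  have hα : α = rep α.length := by
    have : α = (α ++ β).take α.length := by rw [List.take_left]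
    rw [htake] at this
    rw [this]
    simp [rep, List.take_replicate]
  have hβe : β = rep β.length := by
    have : β = (α ++ β).drop α.length := by rw [List.drop_left]
    rw [htake] at this
    rw [this]
    simp [rep, List.drop_replicate]
  have hγ : γ = rep (c - k) ++ sp :: (rep (c + 1) ++ sp :: [sa, sa, sa, sp, sa]) := by
    have h1 : wrd c (c + 1) = rep k ++ (rep (c - k) ++ sp :: (rep (c + 1) ++ sp :: [sa, sa, sa, sp, sa])) := by
      rw [wrd]
      rw [rep_app_rep_app]
      have : k + (c - k) = c := by omega
      rw [this]
    rw [hsplit, htake] at h1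
    exact List.append_cancel_left h1
  -- the pumped word
  have hpump : α ++ (β ++ β) ++ γ ∈ M.accepts := by
    apply hsub
    refine Language.append_mem_mul (Language.append_mem_mul rfl ?_) rfl
    have : β ++ β = List.flatten [β, β] := by simp
    rw [this]
    exact Language.join_mem_kstar (by intro y hy; simp at hy; rcases hy with rfl | rfl <;> rfl)
  have hpw : α ++ (β ++ β) ++ γ = wrd (c + β.length) (c + 1) := by
    rw [hα, hβe, hγ, wrd]
    simp only [List.append_assoc, rep_app_rep_app]
    congr 2
    simp only [rep_length]
    omega
  rw [hpw, hM] at hpump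
  have hβpos : 1 ≤ β.length := List.length_pos_iff.mpr hβ
  exact not_mem_w (by omega) hpump

end MaxSdiProof

/-- Maximal site-directed insertion does not preserve regularity. -/
theorem maxSdi_not_regular :
    ∃ L₁ L₂ : Language Sym4, L₁.IsRegular ∧ L₂.IsRegular ∧
      ¬ Language.IsRegular (maxSdiLang L₁ L₂) := by
  refine ⟨MaxSdiProof.L1, MaxSdiProof.L2, ⟨MaxSdiProof.St1, inferInstance, MaxSdiProof.M1, MaxSdiProof.acc1⟩,
    ⟨MaxSdiProof.St2, inferInstance, MaxSdiProof.M2, MaxSdiProof.acc2⟩, MaxSdiProof.not_reg⟩
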